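/- Assume the pre-diffeo-valued field structure is dense. Let n ≥ 1, let O₁, …, Oₙ be valuation subrings of K, set S = O₁ ∩ ⋯ ∩ Oₙ, and assume K contains at least n pairwise distinct elements algebraic over the prime field F_p. If a ∈ K satisfies a·S ⊆ Q, then a = 0. -/

import Mathlib

def AlgebraicOverPrime (p : ℕ) {K : Type*} [Field K] [CharP K p] (q : K) : Prop :=
  ∃ f : Polynomial (ZMod p), f ≠ 0 ∧ Polynomial.eval₂ (ZMod.castHom dvd_rfl K) q f = 0

section Aux
variable {p : ℕ} {K : Type*} [Field K] [CharP K p]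

lemma aop_isIntegral (hp : p.Prime) {x : K} (h : AlgebraicOverPrime p x) :
    letI : Algebra (ZMod p) K := (ZMod.castHom dvd_rfl K).toAlgebra
    haveI := Fact.mk hp
    IsIntegral (ZMod p) x := by
  letI : Algebra (ZMod p) K := (ZMod.castHom dvd_rfl K).toAlgebra
  haveI := Fact.mk hp
  obtain ⟨f, hf0, hf⟩ := h
  have : IsAlgebraic (ZMod p) x := ⟨f, hf0, by rw [Polynomial.aeval_def]; exact hf⟩
  exact this.isIntegral

lemma AlgebraicOverPrime.sub (hp : p.Prime) {x y : K} (hx : AlgebraicOverPrime p x)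
    (hy : AlgebraicOverPrime p y) : AlgebraicOverPrime p (x - y) := by
  letI : Algebra (ZMod p) K := (ZMod.castHom dvd_rfl K).toAlgebra
  haveI := Fact.mk hp
  have h := (aop_isIntegral hp hx).sub (aop_isIntegral hp hy)
  obtain ⟨f, hm, hf⟩ := h
  exact ⟨f, hm.ne_zero, hf⟩

lemma aop_exists_pow_eq_one (hp : p.Prime) {x : K} (hx : x ≠ 0) (h : AlgebraicOverPrime p x) :
    ∃ N, 1 ≤ N ∧ x ^ N = 1 := by
  letI : Algebra (ZMod p) K := (ZMod.castHom dvd_rfl K).toAlgebra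
  haveI := Fact.mk hp
  have hint := aop_isIntegral hp h
  haveI : Module.Finite (ZMod p) (Algebra.adjoin (ZMod p) ({x} : Set K)) :=
    Module.Finite.iff_fg.mpr hint.fg_adjoin_singleton
  haveI : Finite (Algebra.adjoin (ZMod p) ({x} : Set K)) := Module.finite_of_finite (ZMod p)
  set S := Algebra.adjoin (ZMod p) ({x} : Set K)
  have hxS : x ∈ S := Algebra.self_mem_adjoin_singleton _ _
  obtain ⟨m, n, hmn, he⟩ := Finite.exists_ne_map_eq_of_infinite
    (fun n : ℕ => (⟨x, hxS⟩ : S) ^ n)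
  wlog hlt : m < n generalizing m n
  · exact this n m hmn.symm he.symm (by omega)
  have he' : x ^ m = x ^ n := congrArg Subtype.val he
  refine ⟨n - m, by omega, ?_⟩
  have hxm : x ^ m ≠ 0 := pow_ne_zero _ hx
  have : x ^ m * x ^ (n - m) = x ^ m * 1 := by
    rw [mul_one, ← pow_add]; rw [he']; congr 1; omega
  exact mul_left_cancel₀ hxm this

end Aux

section Aux2
variable {p : ℕ} {K : Type*} [Field K] [CharP K p]

lemma strip_p (hp : p.Prime) {x : K} :
    ∀ N, 1 ≤ N → x ^ N = 1 → ∃ M, 1 ≤ M ∧ ¬ p ∣ M ∧ x ^ M = 1 := by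
  intro N
  induction N using Nat.strong_induction_on with
  | _ N ih =>
    intro hN hxN
    by_cases hd : p ∣ N
    · obtain ⟨M, rfl⟩ := hd
      have hM1 : 1 ≤ M := Nat.pos_of_ne_zero (by rintro rfl; simp at hN)
      have hfr : (x ^ M) ^ p = (1 : K) ^ p := by
        rw [one_pow, ← pow_mul, mul_comm]; exact hxN
      haveI : ExpChar K p := ExpChar.prime hp
      have : x ^ M = 1 := by
        have := frobenius_inj K p (a₁ := x ^ M) (a₂ := 1)
        apply this
        simpa [frobenius_def] using hfr
      exact ih M (by have := hp.two_le; calc M < p * M := by nlinarith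
                     ) hM1 this
    · exact ⟨N, hN, hd, hxN⟩

lemma exists_pow_pow_p (hp : p.Prime) {x : K} (hx : x ≠ 0) (h : AlgebraicOverPrime p x) :
    ∃ m : ℕ, (x ^ m) ^ p = x := by
  obtain ⟨N, hN1, hxN⟩ := aop_exists_pow_eq_one hp hx h
  obtain ⟨M, hM1, hMp, hxM⟩ := strip_p hp N hN1 hxN
  rcases eq_or_lt_of_le hM1 with h1 | hM2
  · refine ⟨0, ?_⟩
    obtain rfl : M = 1 := h1.symm
    simp only [pow_zero, one_pow]
    rw [pow_one] at hxM; exact hxM.symm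
  · have hcop : p.Coprime M := hp.coprime_iff_not_dvd.mpr hMp
    have htot := Nat.ModEq.pow_totient hcop
    set t := M.totient with ht
    have ht1 : 1 ≤ t := Nat.totient_pos.mpr (by omega)
    refine ⟨p ^ (t - 1), ?_⟩
    rw [← pow_mul, ← pow_succ]
    have : t - 1 + 1 = t := by omega
    rw [this]
    have hmod : p ^ t % M = 1 := by
      have : p ^ t % M = 1 % M := htot
      rwa [Nat.one_mod_eq_one.mpr (by omega)] at this
    have hdiv : p ^ t = M * (p ^ t / M) + 1 := by
      conv_lhs => rw [← Nat.div_add_mod (p ^ t) M]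
      rw [hmod]
    rw [hdiv, pow_add, pow_mul, hxM, one_pow, one_mul, pow_one]

lemma mem_of_rootOfUnity {K : Type*} [Field K] {x : K} {N : ℕ} (hN : 1 ≤ N) (hx1 : x ^ N = 1)
    (T : Subring K) (hdich : x ∈ T ∨ x⁻¹ ∈ T) : x ∈ T ∧ x⁻¹ ∈ T := by
  have hx0 : x ≠ 0 := by
    intro h; rw [h, zero_pow (by omega)] at hx1; exact zero_ne_one hx1
  have key : ∀ y : K, y ≠ 0 → y ^ N = 1 → y⁻¹ = y ^ (N - 1) := by
    intro y hy hyN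
    field_simp
    rw [← pow_succ', (by omega : N - 1 + 1 = N), hyN]
  have hinv : x⁻¹ = x ^ (N - 1) := key x hx0 hx1
  have hinv' : (x⁻¹) ^ N = 1 := by rw [inv_pow, hx1, inv_one]
  rcases hdich with h | h
  · exact ⟨h, hinv ▸ pow_mem h _⟩
  · have h2 : x = (x⁻¹) ^ (N - 1) := by
      rw [← key x⁻¹ (inv_ne_zero hx0) hinv', inv_inv]
    exact ⟨h2 ▸ pow_mem h _, h⟩

end Aux2


structure PreDiffeoValued (p : ℕ) (K : Type*) [Field K]
    (Γ : Type*) [AddCommGroup Γ] [LinearOrder Γ] [IsOrderedAddMonoid Γ]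
    (k : Type*) [Field k] (D : Type*) [AddCommGroup D] where
  v : K → WithTop Γ
  v_surj : ∀ γ : Γ, ∃ x : K, v x = (γ : WithTop Γ)
  v_eq_top_iff : ∀ x : K, v x = ⊤ ↔ x = 0
  v_mul : ∀ x y : K, v (x * y) = v x + v y
  v_add : ∀ x y : K, min (v x) (v y) ≤ v (x + y)
  O : Subring K
  mem_O_iff : ∀ x : K, x ∈ O ↔ 0 ≤ v x
  res : K → k
  res_add : ∀ x ∈ O, ∀ y ∈ O, res (x + y) = res x + res y
  res_mul : ∀ x ∈ O, ∀ y ∈ O, res (x * y) = res x * res y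
  res_one : res 1 = 1
  res_surjective : ∀ z : k, ∃ x ∈ O, res x = z
  res_eq_zero_iff : ∀ x ∈ O, (res x = 0 ↔ 0 < v x)
  smul : K → D → D
  smul_add : ∀ a ∈ O, ∀ x y : D, smul a (x + y) = smul a x + smul a y
  add_smul : ∀ a ∈ O, ∀ b ∈ O, ∀ x : D, smul (a + b) x = smul a x + smul b x
  mul_smul : ∀ a ∈ O, ∀ b ∈ O, ∀ x : D, smul (a * b) x = smul a (smul b x)
  one_smul : ∀ x : D, smul 1 x = x
  divisible : ∀ a ∈ O, a ≠ 0 → ∀ y : D, ∃ x : D, smul a x = y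
  total : ∀ x y : D, (∃ a ∈ O, x = smul a y) ∨ (∃ a ∈ O, y = smul a x)
  phi : k → D
  phi_add : ∀ z w : k, phi (z + w) = phi z + phi w
  phi_injective : Function.Injective phi
  phi_smul : ∀ a ∈ O, ∀ z : k, phi (res a * z) = smul a (phi z)
  R : Subring K
  R_le_O : (R : Set K) ⊆ (O : Set K)
  d : K → k
  d_add : ∀ x ∈ R, ∀ y ∈ R, d (x + y) = d x + d y
  d_leibniz : ∀ x ∈ R, ∀ y ∈ R, d (x * y) = res x * d y + res y * d x
  d_surjective : ∀ z : k, ∃ x ∈ R, d x = z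
  pi : K → D
  pi_add : ∀ x ∈ O, ∀ y ∈ O, pi (x + y) = pi x + pi y
  pi_qsmul : ∀ q ∈ R, d q = 0 → ∀ x ∈ O, pi (q * x) = smul q (pi x)
  pi_surjective : ∀ y : D, ∃ x ∈ O, pi x = y
  pi_eq_zero_iff : ∀ x ∈ O, (pi x = 0 ↔ x ∈ R ∧ d x = 0)
  pi_eq_phi_d : ∀ x ∈ R, pi x = phi (d x)
  char_two_sq : p = 2 → ∀ a ∈ O, a ^ 2 ∈ R ∧ d (a ^ 2) = 0
  char_odd_pi : p ≠ 2 → ∀ a ∈ O, ∀ b ∈ O, pi (a * b) = smul a (pi b) + smul b (pi a)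

/-- A pre-diffeo-valued field structure together with the secondary valuation
`val : D → Γ ∪ {∞}`. -/
structure PreDiffeoValuedS (p : ℕ) (K : Type*) [Field K]
    (Γ : Type*) [AddCommGroup Γ] [LinearOrder Γ] [IsOrderedAddMonoid Γ]
    (k : Type*) [Field k] (D : Type*) [AddCommGroup D]
    extends PreDiffeoValued p K Γ k D where
  val : D → WithTop Γ
  val_nonpos_or_top : ∀ x : D, val x ≤ 0 ∨ val x = ⊤
  val_eq_top_iff : ∀ x : D, val x = ⊤ ↔ x = 0
  val_nonneg_iff : ∀ x : D, 0 ≤ val x ↔ ∃ z : k, phi z = x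
  val_smul_of_nonpos : ∀ a ∈ O, ∀ x : D, v a + val x ≤ 0 → val (smul a x) = v a + val x
  val_smul_of_pos : ∀ a ∈ O, ∀ x : D, 0 < v a + val x → val (smul a x) = ⊤
  val_add : ∀ x y : D, min (val x) (val y) ≤ val (x + y)
  smul_of_val_le : ∀ x y : D, val x ≤ val y → ∃ a ∈ O, y = smul a x
  smul_of_val_lt : ∀ x y : D, val x < val y → ∃ a : K, 0 < v a ∧ y = smul a x
  val_unbounded : ∀ γ : Γ, ∃ x : D, val x ≤ (γ : WithTop Γ)

namespace PreDiffeoValued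
variable {p : ℕ} {K : Type*} [Field K] {Γ : Type*} [AddCommGroup Γ] [LinearOrder Γ] [IsOrderedAddMonoid Γ]
  {k : Type*} [Field k] {D : Type*} [AddCommGroup D]

def Q (P : PreDiffeoValued p K Γ k D) : Set K := {x | x ∈ P.R ∧ P.d x = 0}

def IsDense (P : PreDiffeoValued p K Γ k D) : Prop :=
  ∀ a ∈ P.O, ∀ γ : Γ, ∃ q ∈ P.Q, (γ : WithTop Γ) < P.v (a - q)

end PreDiffeoValued


section PLemmas
variable {p : ℕ} {K : Type*} [Field K] {Γ : Type*} [AddCommGroup Γ] [LinearOrder Γ] [IsOrderedAddMonoid Γ]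
  {k : Type*} [Field k] {D : Type*} [AddCommGroup D]
  (P : PreDiffeoValuedS p K Γ k D)

lemma P_v_one : P.v 1 = 0 := by
  have h := P.v_mul 1 1
  rw [mul_one] at h
  have hne : P.v 1 ≠ ⊤ := fun ht => one_ne_zero ((P.v_eq_top_iff 1).mp ht)
  obtain ⟨γ, hγ⟩ := WithTop.ne_top_iff_exists.mp hne
  rw [← hγ, ← WithTop.coe_add] at h
  have : γ = γ + γ := WithTop.coe_injective h
  have : γ = 0 := by
    have := left_eq_add.mp this
    simpa using this
  rw [← hγ, this, WithTop.coe_zero]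

lemma P_dichO {x : K} (hx : x ≠ 0) : x ∈ P.O ∨ x⁻¹ ∈ P.O := by
  rcases le_total 0 (P.v x) with h | h
  · exact Or.inl ((P.mem_O_iff x).mpr h)
  · refine Or.inr ((P.mem_O_iff x⁻¹).mpr ?_)
    have hmul : P.v x + P.v x⁻¹ = 0 := by
      rw [← P.v_mul, mul_inv_cancel₀ hx, P_v_one]
    calc (0 : WithTop Γ) = P.v x + P.v x⁻¹ := hmul.symm
      _ ≤ 0 + P.v x⁻¹ := add_le_add_left h _
      _ = P.v x⁻¹ := zero_add _

lemma P_d_zero : P.d 0 = 0 := by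
  have h := P.d_add 0 (Subring.zero_mem _) 0 (Subring.zero_mem _)
  rw [add_zero] at h
  exact (left_eq_add.mp h)

lemma P_zero_mem_Q : (0 : K) ∈ P.toPreDiffeoValued.Q :=
  ⟨Subring.zero_mem _, P_d_zero P⟩

lemma P_pi_zero : P.pi 0 = 0 := by
  have h := P.pi_add 0 (Subring.zero_mem _) 0 (Subring.zero_mem _)
  rw [add_zero] at h
  exact (left_eq_add.mp h)

lemma P_pi_of_Q {x : K} (hx : x ∈ P.toPreDiffeoValued.Q) : P.pi x = 0 :=
  (P.pi_eq_zero_iff x (P.R_le_O hx.1)).mpr hx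

lemma P_smul_zero {a : K} (ha : a ∈ P.O) : P.smul a 0 = 0 := by
  have h := P.smul_add a ha 0 0
  rw [add_zero] at h
  exact (left_eq_add.mp h)

lemma P_smul_nsmul {a : K} (ha : a ∈ P.O) (m : ℕ) (z : D) :
    P.smul a (m • z) = m • P.smul a z := by
  induction m with
  | zero => simpa using P_smul_zero P ha
  | succ m ih =>
      rw [succ_nsmul, succ_nsmul, P.smul_add a ha, ih]

lemma P_natCast_mem_O (m : ℕ) : ((m : K)) ∈ P.O := by
  exact natCast_mem P.O m

lemma P_torsion [CharP K p] (P : PreDiffeoValuedS p K Γ k D) (z : D) : p • z = 0 := by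
  obtain ⟨c, hc, rfl⟩ := P.pi_surjective z
  have key : ∀ m : ℕ, m • P.pi c = P.pi ((m : K) * c) := by
    intro m
    induction m with
    | zero => simp [P_pi_zero P]
    | succ m ih =>
        rw [succ_nsmul, ih, ← P.pi_add _ (Subring.mul_mem _ (P_natCast_mem_O P m) hc) _ hc]
        congr 1
        push_cast
        ring
  rw [key p, CharP.cast_eq_zero K p, zero_mul, P_pi_zero P]

lemma P_pow_p_mem_Q (hp : p.Prime) [CharP K p] {b : K} (hb : b ∈ P.O) :
    b ^ p ∈ P.toPreDiffeoValued.Q := by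
  rcases eq_or_ne p 2 with h2 | h2
  · subst h2
    exact P.char_two_sq rfl b hb
  · have key : ∀ m : ℕ, P.pi (b ^ (m + 1)) = (m + 1) • P.smul (b ^ m) (P.pi b) := by
      intro m
      induction m with
      | zero => simp [P.one_smul]
      | succ m ih =>
          have hbm : b ^ (m + 1) ∈ P.O := Subring.pow_mem _ hb _
          have h1 : P.pi (b ^ (m + 1 + 1)) =
              P.smul b (P.pi (b ^ (m + 1))) + P.smul (b ^ (m + 1)) (P.pi b) := by
            rw [pow_succ, mul_comm]
            exact P.char_odd_pi h2 b hb (b ^ (m + 1)) hbm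
          rw [h1, ih, P_smul_nsmul P hb, ← P.mul_smul b hb (b ^ m) (Subring.pow_mem _ hb _),
            ← pow_succ']
          rw [succ_nsmul (P.smul (b ^ (m + 1)) (P.pi b)) (m + 1)]
    have hp1 : p - 1 + 1 = p := by have := hp.two_le; omega
    have h0 : P.pi (b ^ p) = 0 := by
      have hk := key (p - 1)
      rw [hp1] at hk
      rw [hk, P_torsion P]
    exact (P.pi_eq_zero_iff (b ^ p) (Subring.pow_mem _ hb _)).mp h0

lemma P_alg_mem [CharP K p] (hp : p.Prime) {x : K} (hx : AlgebraicOverPrime p x) :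
    x ∈ P.toPreDiffeoValued.Q ∧ x ∈ P.O := by
  rcases eq_or_ne x 0 with rfl | hx0
  · exact ⟨P_zero_mem_Q P, Subring.zero_mem _⟩
  · obtain ⟨N, hN1, hxN⟩ := aop_exists_pow_eq_one hp hx0 hx
    have hxO : x ∈ P.O := (mem_of_rootOfUnity hN1 hxN P.O (P_dichO P hx0)).1
    obtain ⟨m, hm⟩ := exists_pow_pow_p hp hx0 hx
    have : (x ^ m) ^ p ∈ P.toPreDiffeoValued.Q :=
      P_pow_p_mem_Q P hp (Subring.pow_mem _ hxO _)
    rw [hm] at this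
    exact ⟨this, hxO⟩

end PLemmas

/-- Assume the pre-diffeo-valued field structure is dense.  Let `n ≥ 1`,
let `O₁, …, Oₙ` be valuation subrings of `K`, set `S = O₁ ∩ ⋯ ∩ Oₙ`, and assume `K`
contains at least `n` pairwise distinct elements algebraic over the prime field `𝔽_p`.
If `a ∈ K` satisfies `a·S ⊆ Q`, then `a = 0`. -/
theorem eq_zero_of_smul_good_multivaluation_subset_Q
    {p : ℕ} (hp : p.Prime) {K : Type*} [Field K] [CharP K p]
    {Γ : Type*} [AddCommGroup Γ] [LinearOrder Γ] [IsOrderedAddMonoid Γ]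
    {k : Type*} [Field k] {D : Type*} [AddCommGroup D]
    (P : PreDiffeoValuedS p K Γ k D)
    (hdense : P.toPreDiffeoValued.IsDense)
    (n : ℕ) (hn : 1 ≤ n)
    (Os : Fin n → Subring K)
    (hOs : ∀ i, ∀ x : K, x ≠ 0 → x ∈ Os i ∨ x⁻¹ ∈ Os i)
    (f : Fin n → K) (hfinj : Function.Injective f)
    (hfalg : ∀ i, AlgebraicOverPrime p (f i))
    (a : K) (haS : ∀ s : K, (∀ i, s ∈ Os i) → a * s ∈ P.Q) :
    a = 0 := by
  by_contra ha0
  haveI := Fact.mk hp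
  have haQ : a ∈ P.toPreDiffeoValued.Q := by
    have h1 : ∀ i, (1 : K) ∈ Os i := fun i => Subring.one_mem _
    have := haS 1 h1
    rwa [mul_one] at this
  have haR : a ∈ P.R := haQ.1
  have haO : a ∈ P.O := P.R_le_O haR
  have hvane : P.v a ≠ ⊤ := fun ht => ha0 ((P.v_eq_top_iff a).mp ht)
  obtain ⟨γa, hva⟩ := WithTop.ne_top_iff_exists.mp hvane
  obtain ⟨y, hy⟩ := P.val_unbounded (-γa)
  obtain ⟨c, hcO, hcy⟩ := P.pi_surjective y
  rw [← hcy] at hy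
  have contra : ∀ q : K, q ∈ P.toPreDiffeoValued.Q → P.v q ≤ (γa : WithTop Γ) →
      P.smul q (P.pi c) ≠ 0 := by
    intro q hqQ hvq h0
    have hqO : q ∈ P.O := P.R_le_O hqQ.1
    have hle : P.v q + P.val (P.pi c) ≤ 0 := by
      calc P.v q + P.val (P.pi c) ≤ ↑γa + ↑(-γa) := add_le_add hvq hy
        _ = ((γa + -γa : Γ) : WithTop Γ) := by rw [WithTop.coe_add]
        _ = 0 := by simp
    have heq := P.val_smul_of_nonpos q hqO (P.pi c) hle
    rw [h0, (P.val_eq_top_iff (0 : D)).mpr rfl] at heq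
    rw [← heq] at hle
    exact (by simp : ¬ ((⊤ : WithTop Γ) ≤ 0)) hle
  have hfQ : ∀ i, f i ∈ P.toPreDiffeoValued.Q := fun i => (P_alg_mem P hp (hfalg i)).1
  have hfO : ∀ i, f i ∈ P.O := fun i => (P_alg_mem P hp (hfalg i)).2
  have hfOs : ∀ i j, f i ∈ Os j := by
    intro i j
    rcases eq_or_ne (f i) 0 with h0 | h0
    · rw [h0]; exact Subring.zero_mem _
    · obtain ⟨N, hN1, hxN⟩ := aop_exists_pow_eq_one hp h0 (hfalg i)
      exact (mem_of_rootOfUnity hN1 hxN (Os j) (hOs j _ h0)).1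
  have hpifi : ∀ i, P.pi (f i) = 0 := fun i => P_pi_of_Q P (hfQ i)
  have hvalne : P.val (P.pi c) ≠ ⊤ := by
    intro ht
    rw [ht] at hy
    exact (by simp : ¬ ((⊤ : WithTop Γ) ≤ ((-γa : Γ) : WithTop Γ))) hy
  have hcne : ∀ i, c ≠ f i := by
    intro i h
    apply hvalne
    rw [h, hpifi i]
    exact (P.val_eq_top_iff 0).mpr rfl
  by_cases hc : ∀ j, c ∈ Os j
  · have hq := haS c hc
    apply contra a haQ (le_of_eq hva.symm)
    rw [← P.pi_qsmul a haR haQ.2 c hcO]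
    exact P_pi_of_Q P hq
  · push_neg at hc
    obtain ⟨j₀, hj₀⟩ := hc
    have key : ∃ i, ∀ j, (c - f i)⁻¹ ∈ Os j := by
      by_contra hng
      push_neg at hng
      choose g hg using hng
      have hsub : ∀ i, c - f i ≠ 0 := fun i => sub_ne_zero.mpr (hcne i)
      have hbadmem : ∀ i j, (c - f i)⁻¹ ∉ Os j → c - f i ∈ Os j := by
        intro i j hb
        exact (hOs j _ (hsub i)).resolve_right hb
      have ginj : Function.Injective g := by
        intro i i' hgii'
        by_contra hne
        have hbi : (c - f i)⁻¹ ∉ Os (g i) := hg i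
        have hbi' : (c - f i')⁻¹ ∉ Os (g i) := by rw [hgii']; exact hg i'
        have hyT : c - f i ∈ Os (g i) := hbadmem i (g i) hbi
        have hy'T : c - f i' ∈ Os (g i) := hbadmem i' (g i) hbi'
        have hw0 : f i - f i' ≠ 0 := sub_ne_zero.mpr (fun h => hne (hfinj h))
        have hwalg : AlgebraicOverPrime p (f i - f i') :=
          AlgebraicOverPrime.sub hp (hfalg i) (hfalg i')
        obtain ⟨Nw, hNw1, hwN⟩ := aop_exists_pow_eq_one hp hw0 hwalg
        obtain ⟨hwT, hwiT⟩ := mem_of_rootOfUnity hNw1 hwN (Os (g i)) (hOs (g i) _ hw0)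
        set t := (c - f i)⁻¹ * (c - f i') with htdef
        have ht0 : t ≠ 0 := mul_ne_zero (inv_ne_zero (hsub i)) (hsub i')
        rcases hOs (g i) t ht0 with htT | htiT
        · apply hbi
          have hid : (c - f i)⁻¹ = (f i - f i')⁻¹ * (t - 1) := by
            rw [htdef]
            field_simp [hsub i, hsub i', hw0]
            ring
          rw [hid]
          exact Subring.mul_mem _ hwiT (Subring.sub_mem _ htT (Subring.one_mem _))
        · apply hbi'
          have hid : (c - f i')⁻¹ = (f i - f i')⁻¹ * (1 - t⁻¹) := by
            rw [htdef, mul_inv, inv_inv]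
            field_simp [hsub i, hsub i', hw0]
            ring
          rw [hid]
          exact Subring.mul_mem _ hwiT (Subring.sub_mem _ (Subring.one_mem _) htiT)
      obtain ⟨i, hij⟩ := Finite.injective_iff_surjective.mp ginj j₀
      apply hj₀
      have hbi : (c - f i)⁻¹ ∉ Os j₀ := by rw [← hij]; exact hg i
      have hmem : c - f i ∈ Os j₀ := hbadmem i j₀ hbi
      have hceq : c = (c - f i) + f i := by ring
      rw [hceq]
      exact Subring.add_mem _ hmem (hfOs i j₀)
    obtain ⟨i, hi⟩ := key
    have hq : a * (c - f i)⁻¹ ∈ P.toPreDiffeoValued.Q := haS _ hi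
    set q := a * (c - f i)⁻¹ with hqdef
    have hqR : q ∈ P.R := hq.1
    have hqO : q ∈ P.O := P.R_le_O hqR
    have heO : c - f i ∈ P.O := Subring.sub_mem _ hcO (hfO i)
    have hne : c - f i ≠ 0 := sub_ne_zero.mpr (hcne i)
    have hae : a = q * (c - f i) := by
      rw [hqdef, mul_assoc, inv_mul_cancel₀ hne, mul_one]
    have hvq : P.v q ≤ (γa : WithTop Γ) := by
      have h1 : P.v a = P.v q + P.v (c - f i) := by rw [hae, P.v_mul]
      have h2 : (0 : WithTop Γ) ≤ P.v (c - f i) := (P.mem_O_iff _).mp heO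
      calc P.v q = P.v q + 0 := (add_zero _).symm
        _ ≤ P.v q + P.v (c - f i) := add_le_add_right h2 _
        _ = P.v a := h1.symm
        _ = ↑γa := hva.symm
    have hpie : P.pi (c - f i) = P.pi c := by
      have h1 := P.pi_add (c - f i) heO (f i) (hfO i)
      rw [sub_add_cancel, hpifi i, add_zero] at h1
      exact h1.symm
    apply contra q hq hvq
    rw [← hpie, ← P.pi_qsmul q hqR hq.2 (c - f i) heO, ← hae]
    exact P_pi_of_Q P haQ
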